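/- A finite connected C-MI graph with no cycles (i.e., a finite tree) is isomorphic to K₁ or K₂. -/

import Mathlib

/-- A graph `G` is C-MI if every monomorphism (injective homomorphism) from a
finite connected induced subgraph of `G` into `G` extends to an automorphism. -/
def IsCMI {α : Type*} (G : SimpleGraph α) : Prop :=
  ∀ A : Set α, A.Finite → (G.induce A).Connected →
    ∀ φ : G.induce A →g G, Function.Injective φ →
      ∃ ψ : G ≃g G, ∀ a : A, ψ a.1 = φ a

section Aux

open scoped Classical

variable {α : Type*} [Fintype α] (G : SimpleGraph α)

/-- An automorphism preserves degrees. -/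
lemma iso_degree_eq (ψ : G ≃g G) (v : α) :
    G.degree (ψ v) = G.degree v := by
  rw [← SimpleGraph.card_neighborSet_eq_degree, ← SimpleGraph.card_neighborSet_eq_degree]
  exact (Fintype.card_congr (ψ.mapNeighborSet v)).symm

/-- In a connected graph with at least two vertices, every vertex has a neighbor. -/
lemma exists_adj_of_connected (hconn : G.Connected) (h2 : 2 ≤ Fintype.card α) (v : α) :
    ∃ w, G.Adj v w := by
  obtain ⟨w, hw⟩ := Fintype.exists_ne_of_one_lt_card (by omega) v
  obtain ⟨p⟩ := hconn.preconnected v w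
  cases p with
  | nil => exact absurd rfl (Ne.symm hw)
  | cons h p => exact ⟨_, h⟩

end Aux

/-- A finite connected C-MI graph with no cycles (a finite tree) is isomorphic
to `K₁` or `K₂`. -/
theorem cMI_tree_is_K1_or_K2 {α : Type*} [Fintype α]
    (G : SimpleGraph α) (hG : IsCMI G)
    (hconn : G.Connected) (hacyc : G.IsAcyclic) :
    Nonempty (G ≃g (⊤ : SimpleGraph (Fin 1))) ∨
      Nonempty (G ≃g (⊤ : SimpleGraph (Fin 2))) := by
  classical
  have hne : Nonempty α := hconn.nonempty
  have hcard1 : 1 ≤ Fintype.card α := Fintype.card_pos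
  rcases eq_or_lt_of_le hcard1 with h1 | h1
  · -- card = 1
    left
    have e : α ≃ Fin 1 := Fintype.equivFinOfCardEq h1.symm
    have hsub : Subsingleton α := by
      rw [← Fintype.card_le_one_iff_subsingleton]; omega
    refine ⟨⟨e, ?_⟩⟩
    intro a b
    simp only [SimpleGraph.top_adj]
    constructor
    · intro h
      exact absurd (congrArg e (Subsingleton.elim a b)) h
    · intro h
      exact absurd (Subsingleton.elim a b) h.ne
  rcases eq_or_lt_of_le (show 2 ≤ Fintype.card α from h1) with h2 | h2
  · -- card = 2
    right
    have e : α ≃ Fin 2 := Fintype.equivFinOfCardEq h2.symm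
    have key : ∀ a b : α, a ≠ b → G.Adj a b := by
      intro a b hab
      obtain ⟨p⟩ := hconn.preconnected a b
      cases p with
      | nil => exact absurd rfl hab
      | @cons _ x _ h p =>
        by_cases hx : x = b
        · exact hx ▸ h
        · exfalso
          have hc3 : ({a, b, x} : Finset α).card = 3 := by
            rw [Finset.card_insert_of_notMem (by simp [hab, h.ne]),
              Finset.card_insert_of_notMem (by simp only [Finset.mem_singleton]; exact fun hbx => hx hbx.symm)]
            simp
          have h3 : 3 ≤ Fintype.card α := by
            calc 3 = ({a, b, x} : Finset α).card := hc3.symm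
              _ ≤ Fintype.card α := Finset.card_le_univ _
          omega
    refine ⟨⟨e, ?_⟩⟩
    intro a b
    simp only [SimpleGraph.top_adj]
    constructor
    · intro h
      exact key a b (fun he => h (congrArg e he))
    · intro h
      exact fun he => h.ne (e.injective he)
  · -- card ≥ 3 : contradiction
    exfalso
    have htree : G.IsTree := ⟨hconn, hacyc⟩
    have hedge := htree.card_edgeFinset
    have hsum := G.sum_degrees_eq_twice_card_edges
    have hpos : ∀ v : α, 1 ≤ G.degree v := by
      intro v
      rw [Nat.one_le_iff_ne_zero, ← Nat.pos_iff_ne_zero, G.degree_pos_iff_exists_adj]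
      exact exists_adj_of_connected G hconn (by omega) v
    have hleaf : ∃ u, G.degree u = 1 := by
      by_contra hc
      push_neg at hc
      have h2le : ∀ v : α, 2 ≤ G.degree v := by
        intro v
        have := hpos v
        have := hc v
        omega
      have : 2 * Fintype.card α ≤ ∑ v, G.degree v := by
        calc 2 * Fintype.card α = ∑ _v : α, 2 := by
              simp [Finset.sum_const, Nat.mul_comm]
          _ ≤ ∑ v, G.degree v := Finset.sum_le_sum fun v _ => h2le v
      omega
    obtain ⟨u, hu⟩ := hleaf
    obtain ⟨v, huv⟩ := exists_adj_of_connected G hconn (by omega) u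
    have hv2 : 2 ≤ G.degree v := by
      rcases eq_or_lt_of_le (hpos v) with hv1 | hv1
      · -- deg v = 1 : everything reachable from u is in {u,v}, contra card ≥ 3
        exfalso
        have hnu : G.neighborFinset u = {v} := by
          apply Finset.eq_singleton_iff_unique_mem.mpr
          refine ⟨by simpa using huv, ?_⟩
          intro x hx
          by_contra hxv
          have hsub : ({v, x} : Finset α) ⊆ G.neighborFinset u := by
            intro y hy
            simp only [Finset.mem_insert, Finset.mem_singleton] at hy
            rcases hy with rfl | rfl
            · simpa using huv
            · exact hx
          have := Finset.card_le_card hsub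
          rw [Finset.card_pair (Ne.symm hxv), G.card_neighborFinset_eq_degree] at this
          omega
        have hnv : G.neighborFinset v = {u} := by
          apply Finset.eq_singleton_iff_unique_mem.mpr
          refine ⟨by simpa using huv.symm, ?_⟩
          intro x hx
          by_contra hxu
          have hsub : ({u, x} : Finset α) ⊆ G.neighborFinset v := by
            intro y hy
            simp only [Finset.mem_insert, Finset.mem_singleton] at hy
            rcases hy with rfl | rfl
            · simpa using huv.symm
            · exact hx
          have := Finset.card_le_card hsub
          rw [Finset.card_pair (Ne.symm hxu), G.card_neighborFinset_eq_degree] at this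
          omega
        have key : ∀ (a w : α), a ∈ ({u, v} : Set α) → G.Walk a w → w ∈ ({u, v} : Set α) := by
          intro a w ha p
          induction p with
          | nil => exact ha
          | @cons a x w h p ih =>
            apply ih
            have hxy : x ∈ G.neighborFinset a := by simpa using h
            rcases ha with rfl | rfl
            · rw [hnu] at hxy
              simp at hxy
              right; exact hxy
            · rw [hnv] at hxy
              simp at hxy
              left; exact hxy
        have hss : ∀ w : α, w ∈ ({u, v} : Finset α) := by
          intro w
          obtain ⟨p⟩ := hconn.preconnected u w
          have := key u w (by left; rfl) p
          simpa using this
        have hle : Fintype.card α ≤ ({u, v} : Finset α).card :=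
          Finset.card_le_card (fun x _ => hss x) |>.trans_eq (by simp) |>.trans_eq rfl
        have hle2 : ({u, v} : Finset α).card ≤ 2 :=
          (Finset.card_insert_le _ _).trans (by simp)
        omega
      · exact hv1
    -- apply C-MI to the singleton {u} mapped to v
    set A : Set α := {u} with hA
    have hAfin : A.Finite := Set.finite_singleton u
    have hAconn : (G.induce A).Connected := by
      haveI : Nonempty A := ⟨⟨u, rfl⟩⟩
      refine ⟨fun a b => ?_⟩
      have hab : a = b := Subtype.ext (by rw [a.2, b.2])
      exact hab ▸ SimpleGraph.Reachable.refl a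
    have hφadj : ∀ {a b : A}, (G.induce A).Adj a b → G.Adj v v := by
      intro a b hab
      exfalso
      have : G.Adj a.1 b.1 := hab
      rw [(a.2 : a.1 = u), (b.2 : b.1 = u)] at this
      exact G.irrefl this
    obtain ⟨ψ, hψ⟩ := hG A hAfin hAconn ⟨fun _ => v, hφadj⟩
      (fun a b _ => Subtype.ext (by rw [a.2, b.2]))
    have hψu : ψ u = v := hψ ⟨u, rfl⟩
    have hd := iso_degree_eq G ψ u
    rw [hψu, hu] at hd
    omega
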